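/- arXiv:math/0502079 — 2 statements merged into one kernel-verified Lean document; each statement's English description precedes it below -/
import Mathlib

section
/- Let u be a smooth positive solution of the heat equation on an open set Q ⊂ ℝⁿ × ℝ with u ≤ 1 on Q. Set f := ln u (so f ≤ 0) and w := |∇f|²/(1−f)². Then on Q one has the differential inequality Δw − ∂_t w ≥ (2f/(1−f)) ⟨∇f, ∇w⟩ + 2(1−f) w². (Inequality (2.9) in the flat case k = 0; this is the key pointwise inequality in the proof of Theorem 1.1.) -/
open Metric Set

/-- Spatial gradient of a function on Euclidean space. -/
noncomputable def sgrad {n : ℕ} (f : EuclideanSpace ℝ (Fin n) → ℝ)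
    (x : EuclideanSpace ℝ (Fin n)) : EuclideanSpace ℝ (Fin n) :=
  gradient f x

/-- Spatial Laplacian: sum of the second partial derivatives. -/
noncomputable def slap {n : ℕ} (f : EuclideanSpace ℝ (Fin n) → ℝ)
    (x : EuclideanSpace ℝ (Fin n)) : ℝ :=
  ∑ i : Fin n, fderiv ℝ (fun y => fderiv ℝ f y (EuclideanSpace.single i 1)) x
    (EuclideanSpace.single i 1)

/-- `u(x,t)` is a (smooth) solution of the heat equation on `Q`. -/
def IsHeatSolutionOn {n : ℕ} (u : EuclideanSpace ℝ (Fin n) → ℝ → ℝ)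
    (Q : Set (EuclideanSpace ℝ (Fin n) × ℝ)) : Prop :=
  ContDiffOn ℝ (⊤ : ℕ∞) (fun p : EuclideanSpace ℝ (Fin n) × ℝ => u p.1 p.2) Q ∧
  ∀ p ∈ Q, deriv (fun s => u p.1 s) p.2 = slap (fun y => u y p.2) p.1


noncomputable def Dv {H : Type*} [NormedAddCommGroup H] [NormedSpace ℝ H]
    (z : H) (A : H → ℝ) (q : H) : ℝ := fderiv ℝ A q z

section DvAPI
variable {H : Type*} [NormedAddCommGroup H] [NormedSpace ℝ H]
variable {A B : H → ℝ} {q z : H} {V : Set H}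

lemma da_of_cd {F : Type*} [NormedAddCommGroup F] [NormedSpace ℝ F] {A : H → F}
    (hA : ContDiffOn ℝ (⊤ : ℕ∞) A V) (hV : IsOpen V) (hq : q ∈ V) :
    DifferentiableAt ℝ A q :=
  (hA.contDiffAt (hV.mem_nhds hq)).differentiableAt (by simp)

lemma cd_Dv (hA : ContDiffOn ℝ (⊤ : ℕ∞) A V) (hV : IsOpen V) :
    ContDiffOn ℝ (⊤ : ℕ∞) (Dv z A) V := by
  have h1 : ContDiffOn ℝ (⊤ : ℕ∞) (fderiv ℝ A) V :=
    hA.fderiv_of_isOpen hV (by exact_mod_cast le_top)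
  exact h1.clm_apply contDiffOn_const

lemma da_Dv (hA : ContDiffOn ℝ (⊤ : ℕ∞) A V) (hV : IsOpen V) (hq : q ∈ V) :
    DifferentiableAt ℝ (Dv z A) q :=
  da_of_cd (cd_Dv hA hV) hV hq

lemma Dv_congr_nhds (h : A =ᶠ[nhds q] B) : Dv z A q = Dv z B q := by
  unfold Dv; rw [h.fderiv_eq]

lemma Dv_congr_on (hV : IsOpen V) (hq : q ∈ V) (h : ∀ y ∈ V, A y = B y) :
    Dv z A q = Dv z B q :=
  Dv_congr_nhds (Filter.eventuallyEq_of_mem (hV.mem_nhds hq) h)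

lemma Dv_add (hA : DifferentiableAt ℝ A q) (hB : DifferentiableAt ℝ B q) :
    Dv z (fun y => A y + B y) q = Dv z A q + Dv z B q := by
  unfold Dv; rw [fderiv_fun_add hA hB]; rfl

lemma Dv_mul (hA : DifferentiableAt ℝ A q) (hB : DifferentiableAt ℝ B q) :
    Dv z (fun y => A y * B y) q = A q * Dv z B q + B q * Dv z A q := by
  unfold Dv; rw [fderiv_fun_mul hA hB]; simp [mul_comm]

lemma Dv_const_mul (c : ℝ) (hA : DifferentiableAt ℝ A q) :
    Dv z (fun y => c * A y) q = c * Dv z A q := by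
  unfold Dv; rw [fderiv_const_mul hA]; simp

lemma Dv_const_sub (c : ℝ) (hA : DifferentiableAt ℝ A q) :
    Dv z (fun y => c - A y) q = -(Dv z A q) := by
  unfold Dv; rw [(hA.hasFDerivAt.const_sub c).fderiv]; simp

lemma Dv_sum {ι : Type*} [Fintype ι] {A : ι → H → ℝ}
    (hA : ∀ i, DifferentiableAt ℝ (A i) q) :
    Dv z (fun y => ∑ i, A i y) q = ∑ i, Dv z (A i) q := by
  unfold Dv
  rw [fderiv_fun_sum (fun i _ => hA i)]
  simp

lemma Dv_pow (m : ℕ) (hA : DifferentiableAt ℝ A q) :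
    Dv z (fun y => A y ^ m) q = m * A q ^ (m - 1) * Dv z A q := by
  induction m with
  | zero => simp [Dv, fderiv_const]
  | succ m ih =>
    have h1 : Dv z (fun y => A y ^ m * A y) q
        = A q ^ m * Dv z A q + A q * Dv z (fun y => A y ^ m) q := Dv_mul (hA.pow m) hA
    have h2 : (fun y => A y ^ (m + 1)) = fun y => A y ^ m * A y := by
      funext y; ring
    rw [h2, h1, ih]
    rcases Nat.eq_zero_or_pos m with hm | hm
    · subst hm; simp
    · have hpow : A q * A q ^ (m - 1) = A q ^ m := by
        conv_rhs => rw [← Nat.succ_pred_eq_of_pos hm]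
        rw [pow_succ, Nat.pred_eq_sub_one]
        ring
      have h3 : A q * (↑m * A q ^ (m - 1) * Dv z A q) = ↑m * A q ^ m * Dv z A q := by
        rw [← hpow]; ring
      rw [h3, show (m + 1 : ℕ) - 1 = m from rfl]
      push_cast
      ring

lemma Dv_inv (hB : DifferentiableAt ℝ B q) (hB0 : B q ≠ 0) :
    Dv z (fun y => (B y)⁻¹) q = -(Dv z B q) / B q ^ 2 := by
  unfold Dv
  have hh : HasFDerivAt (fun y => (B y)⁻¹)
      ((-ContinuousLinearMap.mulLeftRight ℝ ℝ (B q)⁻¹ (B q)⁻¹).comp (fderiv ℝ B q)) q :=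
    (hasFDerivAt_inv' hB0).comp q hB.hasFDerivAt
  rw [hh.fderiv]
  simp [ContinuousLinearMap.mulLeftRight_apply]
  field_simp

lemma Dv_div (hA : DifferentiableAt ℝ A q) (hB : DifferentiableAt ℝ B q) (hB0 : B q ≠ 0) :
    Dv z (fun y => A y / B y) q = (B q * Dv z A q - A q * Dv z B q) / B q ^ 2 := by
  have h2 : (fun y => A y / B y) = fun y => A y * (B y)⁻¹ := by
    funext y; rw [div_eq_mul_inv]
  rw [h2, Dv_mul hA (hB.fun_inv hB0), Dv_inv hB hB0]
  field_simp
  ring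

lemma da_div {A B : H → ℝ} {q : H} (hA : DifferentiableAt ℝ A q)
    (hB : DifferentiableAt ℝ B q) (hB0 : B q ≠ 0) :
    DifferentiableAt ℝ (fun y => A y / B y) q := by
  simp only [div_eq_mul_inv]
  exact hA.mul (hB.inv hB0)

lemma Dv_log (hA : DifferentiableAt ℝ A q) (h0 : A q ≠ 0) :
    Dv z (fun y => Real.log (A y)) q = Dv z A q / A q := by
  unfold Dv
  rw [(hA.hasFDerivAt.log h0).fderiv]
  simp [div_eq_inv_mul]

lemma Dv_comm (hA : ContDiffOn ℝ (⊤ : ℕ∞) A V) (hV : IsOpen V) (hq : q ∈ V) (z w : H) :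
    Dv z (Dv w A) q = Dv w (Dv z A) q := by
  have hev : ∀ᶠ y in nhds q, HasFDerivAt A (fderiv ℝ A y) y := by
    filter_upwards [hV.mem_nhds hq] with y hy
    exact (da_of_cd hA hV hy).hasFDerivAt
  have hf'' : HasFDerivAt (fderiv ℝ A) (fderiv ℝ (fderiv ℝ A) q) q :=
    (da_of_cd (hA.fderiv_of_isOpen hV (by exact_mod_cast le_top)) hV hq).hasFDerivAt
  have hsymm := second_derivative_symmetric_of_eventually hev hf'' z w
  have key : ∀ ζ ξ : H,
      Dv ζ (Dv ξ A) q = (fderiv ℝ (fderiv ℝ A) q ζ) ξ := by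
    intro ζ ξ
    have hh : HasFDerivAt (fun y => (fderiv ℝ A y) ξ)
        ((ContinuousLinearMap.apply ℝ ℝ ξ).comp (fderiv ℝ (fderiv ℝ A) q)) q :=
      (ContinuousLinearMap.apply ℝ ℝ ξ).hasFDerivAt.comp q hf''
    unfold Dv
    rw [hh.fderiv]
    rfl
  rw [key z w, key w z, hsymm]
end DvAPI

section Slice
variable {E : Type*} [NormedAddCommGroup E] [NormedSpace ℝ E]

lemma fderiv_slice_fst (G : E × ℝ → ℝ) (x : E) (t : ℝ)
    (h : DifferentiableAt ℝ G (x, t)) (ze : E) :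
    fderiv ℝ (fun y => G (y, t)) x ze = fderiv ℝ G (x, t) (ze, 0) := by
  have hemb : HasFDerivAt (fun y : E => ((y, t) : E × ℝ))
      ((ContinuousLinearMap.id ℝ E).prod 0) x :=
    (hasFDerivAt_id x).prodMk (hasFDerivAt_const t x)
  have hc : HasFDerivAt (fun y => G (y, t))
      ((fderiv ℝ G (x, t)).comp ((ContinuousLinearMap.id ℝ E).prod 0)) x :=
    h.hasFDerivAt.comp x hemb
  rw [hc.fderiv]
  rfl

lemma deriv_slice_snd (G : E × ℝ → ℝ) (x : E) (t : ℝ)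
    (h : DifferentiableAt ℝ G (x, t)) :
    deriv (fun s => G (x, s)) t = fderiv ℝ G (x, t) (0, 1) := by
  have hemb : HasDerivAt (fun s : ℝ => ((x, s) : E × ℝ)) ((0 : E), (1 : ℝ)) t :=
    (hasDerivAt_const t x).prodMk (hasDerivAt_id t)
  have hc : HasDerivAt (fun s => G (x, s)) (fderiv ℝ G (x, t) ((0 : E), (1 : ℝ))) t :=
    h.hasFDerivAt.comp_hasDerivAt t hemb
  rw [hc.deriv]
end Slice

section Grad
variable {n : ℕ}

lemma grad_inner (h : EuclideanSpace ℝ (Fin n) → ℝ) (x v : EuclideanSpace ℝ (Fin n)) :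
    (inner ℝ (gradient h x) v : ℝ) = fderiv ℝ h x v := by
  rw [← InnerProductSpace.toDual_apply_apply]
  simp [gradient]

lemma grad_coord (h : EuclideanSpace ℝ (Fin n) → ℝ) (x : EuclideanSpace ℝ (Fin n)) (i : Fin n) :
    gradient h x i = fderiv ℝ h x (EuclideanSpace.single i 1) := by
  have h1 := grad_inner h x (EuclideanSpace.single i 1)
  rw [EuclideanSpace.inner_single_right] at h1
  simpa using h1

lemma inner_sgrad (h k : EuclideanSpace ℝ (Fin n) → ℝ) (x : EuclideanSpace ℝ (Fin n)) :
    (inner ℝ (sgrad h x) (sgrad k x) : ℝ)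
      = ∑ i, fderiv ℝ h x (EuclideanSpace.single i 1) * fderiv ℝ k x (EuclideanSpace.single i 1) := by
  rw [PiLp.inner_apply]
  refine Finset.sum_congr rfl fun i _ => ?_
  rw [show sgrad h x = gradient h x from rfl, show sgrad k x = gradient k x from rfl,
    grad_coord h x i, grad_coord k x i]
  simp [RCLike.inner_apply, mul_comm]

lemma normsq_sgrad (h : EuclideanSpace ℝ (Fin n) → ℝ) (x : EuclideanSpace ℝ (Fin n)) :
    ‖sgrad h x‖ ^ 2 = ∑ i, fderiv ℝ h x (EuclideanSpace.single i 1) ^ 2 := by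
  rw [← real_inner_self_eq_norm_sq, inner_sgrad]
  simp [pow_two]
end Grad

lemma slap_slice {n : ℕ} (V : Set (EuclideanSpace ℝ (Fin n) × ℝ)) (hV : IsOpen V)
    (G : EuclideanSpace ℝ (Fin n) × ℝ → ℝ) (hG : ContDiffOn ℝ (⊤ : ℕ∞) G V)
    {x : EuclideanSpace ℝ (Fin n)} {t : ℝ} (hq : (x, t) ∈ V) :
    slap (fun y => G (y, t)) x
      = ∑ i, Dv ((EuclideanSpace.single i 1 : EuclideanSpace ℝ (Fin n)), (0:ℝ))
          (Dv ((EuclideanSpace.single i 1 : EuclideanSpace ℝ (Fin n)), (0:ℝ)) G) (x, t) := by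
  unfold slap
  refine Finset.sum_congr rfl fun i _ => ?_
  have hS : IsOpen {y : EuclideanSpace ℝ (Fin n) | (y, t) ∈ V} :=
    hV.preimage (Continuous.prodMk continuous_id continuous_const)
  have hev : (fun y => fderiv ℝ (fun z => G (z, t)) y (EuclideanSpace.single i 1))
      =ᶠ[nhds x] (fun y => Dv ((EuclideanSpace.single i 1 : EuclideanSpace ℝ (Fin n)), (0:ℝ)) G (y, t)) := by
    filter_upwards [hS.mem_nhds hq] with y hy
    exact fderiv_slice_fst G y t (da_of_cd hG hV hy) _
  rw [hev.fderiv_eq]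
  exact fderiv_slice_fst (Dv (EuclideanSpace.single i 1, (0:ℝ)) G) x t (da_Dv hG hV hq) _


lemma slap_congr {n : ℕ} {A B : EuclideanSpace ℝ (Fin n) → ℝ}
    {x : EuclideanSpace ℝ (Fin n)} (h : A =ᶠ[nhds x] B) : slap A x = slap B x := by
  unfold slap
  refine Finset.sum_congr rfl fun i _ => ?_
  have hev : (fun y => fderiv ℝ A y (EuclideanSpace.single i 1))
      =ᶠ[nhds x] (fun y => fderiv ℝ B y (EuclideanSpace.single i 1)) :=
    (h.fderiv (𝕜 := ℝ)).mono fun y hy => by simp only [hy]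
  rw [hev.fderiv_eq]

lemma alg (φ B2 g Y : ℝ) (hφ : 1 ≤ φ) (hB : 0 ≤ B2) (hg : 0 ≤ g)
    (hCS : Y ^ 2 ≤ g ^ 2 * B2) : 0 ≤ φ ^ 2 * B2 + 2 * φ * Y + g ^ 2 := by
  set r := Real.sqrt B2 with hr
  have hr0 : 0 ≤ r := Real.sqrt_nonneg _
  have hr2 : r ^ 2 = B2 := Real.sq_sqrt hB
  have h1 : Y ^ 2 ≤ (g * r) ^ 2 := by rw [mul_pow, hr2]; exact hCS
  have h2 : -(g * r) ≤ Y := (abs_le_of_sq_le_sq' h1 (mul_nonneg hg hr0)).1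
  nlinarith [sq_nonneg (φ * r - g), mul_nonneg hg hr0, h2, hφ, sq_nonneg r]

section Main
variable {n : ℕ}

noncomputable def vv (n : ℕ) (i : Fin n) : EuclideanSpace ℝ (Fin n) × ℝ :=
  (EuclideanSpace.single i 1, 0)

noncomputable def tau (n : ℕ) : EuclideanSpace ℝ (Fin n) × ℝ := (0, 1)

noncomputable def PP (n : ℕ) (L : EuclideanSpace ℝ (Fin n) × ℝ → ℝ) (i : Fin n) :
    EuclideanSpace ℝ (Fin n) × ℝ → ℝ := Dv (vv n i) L

noncomputable def GG (n : ℕ) (L : EuclideanSpace ℝ (Fin n) × ℝ → ℝ) :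
    EuclideanSpace ℝ (Fin n) × ℝ → ℝ := fun q => ∑ i, PP n L i q ^ 2

noncomputable def WW (n : ℕ) (L : EuclideanSpace ℝ (Fin n) × ℝ → ℝ) :
    EuclideanSpace ℝ (Fin n) × ℝ → ℝ := fun q => GG n L q / (1 - L q) ^ 2

theorem main_aux (Q : Set (EuclideanSpace ℝ (Fin n) × ℝ)) (hQ : IsOpen Q)
    (L : EuclideanSpace ℝ (Fin n) × ℝ → ℝ) (hL : ContDiffOn ℝ (⊤ : ℕ∞) L Q)
    (hL0 : ∀ q ∈ Q, L q ≤ 0)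
    (hheatL : ∀ q ∈ Q, Dv (tau n) L q = (∑ i, Dv (vv n i) (PP n L i) q) + GG n L q)
    (p : EuclideanSpace ℝ (Fin n) × ℝ) (hp : p ∈ Q) :
    (∑ k, Dv (vv n k) (Dv (vv n k) (WW n L)) p) - Dv (tau n) (WW n L) p ≥
      (2 * L p / (1 - L p)) * (∑ i, PP n L i p * Dv (vv n i) (WW n L) p) +
      2 * (1 - L p) * (WW n L p) ^ 2 := by
  classical
  -- abbreviations
  set φ : ℝ := 1 - L p with hφ
  set g : ℝ := ∑ i, (Dv (vv n i) L p) ^ 2 with hg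
  set T1 : ℝ := ∑ k, ∑ i, (Dv (vv n k) (Dv (vv n i) L) p) ^ 2 with hT1
  set T2 : ℝ := ∑ k, ∑ i, (Dv (vv n i) L p) *
      (Dv (vv n k) (Dv (vv n k) (Dv (vv n i) L)) p) with hT2
  set T3 : ℝ := ∑ k, ∑ i, (Dv (vv n k) L p) *
      ((Dv (vv n i) L p) * (Dv (vv n k) (Dv (vv n i) L) p)) with hT3
  set T4 : ℝ := ∑ k, Dv (vv n k) (Dv (vv n k) L) p with hT4
  clear_value φ g T1 T2 T3 T4
  have hPP : PP n L = fun i => Dv (vv n i) L := rfl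
  simp only [hPP] at hheatL ⊢
  -- basic facts
  have hdL : ∀ q ∈ Q, DifferentiableAt ℝ L q := fun q hq => da_of_cd hL hQ hq
  have hPc : ∀ i : Fin n, ContDiffOn ℝ (⊤ : ℕ∞) (Dv (vv n i) L) Q := fun i => cd_Dv hL hQ
  have hGc : ContDiffOn ℝ (⊤ : ℕ∞) (GG n L) Q := by
    have h0 : ContDiffOn ℝ (⊤ : ℕ∞) (fun q => ∑ i, (Dv (vv n i) L q) ^ 2) Q :=
      ContDiffOn.sum fun i _ => (hPc i).pow 2
    exact h0
  have hdG : ∀ q ∈ Q, DifferentiableAt ℝ (GG n L) q := fun q hq => da_of_cd hGc hQ hq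
  have hΦ0 : ∀ q ∈ Q, (1 - L q) ≠ 0 := fun q hq => by
    have := hL0 q hq; intro h; linarith [this]
  have hφ1 : (1:ℝ) ≤ φ := by rw [hφ]; linarith [hL0 p hp]
  have hφpos : (0:ℝ) < φ := lt_of_lt_of_le one_pos hφ1
  have hφne : φ ≠ 0 := ne_of_gt hφpos
  have hGp : GG n L p = g := by rw [hg]; rfl
  have hg0 : (0:ℝ) ≤ g := by
    rw [hg]; exact Finset.sum_nonneg fun i _ => sq_nonneg _
  have hT1nn : (0:ℝ) ≤ T1 := by
    rw [hT1]
    exact Finset.sum_nonneg fun k _ => Finset.sum_nonneg fun i _ => sq_nonneg _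
  -- derivative formula for GG
  have hDG' : ∀ q ∈ Q, ∀ z, Dv z (GG n L) q
      = 2 * ∑ i, (Dv (vv n i) L q) * (Dv z (Dv (vv n i) L) q) := by
    intro q hq z
    have h0 : GG n L = fun q => ∑ i, (Dv (vv n i) L q) ^ 2 := rfl
    rw [h0, Dv_sum (fun i => (da_Dv hL hQ hq).fun_pow 2), Finset.mul_sum]
    refine Finset.sum_congr rfl fun i _ => ?_
    rw [Dv_pow 2 (da_Dv hL hQ hq)]
    push_cast; ring
  -- derivative formula for WW
  have hDW : ∀ q ∈ Q, ∀ z, Dv z (WW n L) q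
      = Dv z (GG n L) q / (1 - L q) ^ 2
        + 2 * (GG n L q * Dv z L q) / (1 - L q) ^ 3 := by
    intro q hq z
    have hdΦ : DifferentiableAt ℝ (fun y => 1 - L y) q := (hdL q hq).const_sub 1
    have hW0 : WW n L = fun q => GG n L q / (1 - L q) ^ 2 := rfl
    rw [hW0, Dv_div (hdG q hq) (hdΦ.fun_pow 2) (pow_ne_zero 2 (hΦ0 q hq))]
    rw [Dv_pow 2 hdΦ, Dv_const_sub 1 (hdL q hq)]
    have h0 := hΦ0 q hq
    field_simp
    ring
  -- second derivative of WW in direction vv k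
  have hbody : ∀ k, Dv (vv n k) (Dv (vv n k) (WW n L)) p
      = Dv (vv n k) (Dv (vv n k) (GG n L)) p / φ ^ 2
        + 4 * (Dv (vv n k) L p) * (Dv (vv n k) (GG n L) p) / φ ^ 3
        + 2 * g * (Dv (vv n k) (Dv (vv n k) L) p) / φ ^ 3
        + 6 * g * (Dv (vv n k) L p) ^ 2 / φ ^ 4 := by
    intro k
    have h1 : Dv (vv n k) (Dv (vv n k) (WW n L)) p
        = Dv (vv n k) (fun q => Dv (vv n k) (GG n L) q / (1 - L q) ^ 2
            + 2 * (GG n L q * Dv (vv n k) L q) / (1 - L q) ^ 3) p :=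
      Dv_congr_on hQ hp (fun y hy => hDW y hy (vv n k))
    have hdDG : DifferentiableAt ℝ (Dv (vv n k) (GG n L)) p := da_Dv hGc hQ hp
    have hdDL : DifferentiableAt ℝ (Dv (vv n k) L) p := da_Dv hL hQ hp
    have hdΦ : DifferentiableAt ℝ (fun y => 1 - L y) p := (hdL p hp).const_sub 1
    have hne := hΦ0 p hp
    have hne2 : (1 - L p) ^ 2 ≠ 0 := pow_ne_zero 2 hne
    have hne3 : (1 - L p) ^ 3 ≠ 0 := pow_ne_zero 3 hne
    have hdmul : DifferentiableAt ℝ (fun q => GG n L q * Dv (vv n k) L q) p :=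
      (hdG p hp).mul hdDL
    have hdq1 : DifferentiableAt ℝ
        (fun q => Dv (vv n k) (GG n L) q / (1 - L q) ^ 2) p :=
      da_div hdDG (hdΦ.pow 2) hne2
    have hdq2 : DifferentiableAt ℝ
        (fun q => 2 * (GG n L q * Dv (vv n k) L q) / (1 - L q) ^ 3) p :=
      da_div (hdmul.const_mul 2) (hdΦ.pow 3) hne3
    rw [h1, Dv_add hdq1 hdq2,
      Dv_div hdDG (hdΦ.fun_pow 2) hne2,
      Dv_div (hdmul.const_mul 2) (hdΦ.fun_pow 3) hne3,
      Dv_const_mul 2 hdmul,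
      Dv_mul (hdG p hp) hdDL,
      Dv_pow 2 hdΦ, Dv_pow 3 hdΦ,
      Dv_const_sub 1 (hdL p hp),
      hGp, ← hφ]
    field_simp
    ring
  -- second derivative of GG
  have hDkk : ∀ k, Dv (vv n k) (Dv (vv n k) (GG n L)) p
      = 2 * ∑ i, ((Dv (vv n k) (Dv (vv n i) L) p) ^ 2
          + (Dv (vv n i) L p) * (Dv (vv n k) (Dv (vv n k) (Dv (vv n i) L)) p)) := by
    intro k
    have h1 : Dv (vv n k) (Dv (vv n k) (GG n L)) p
        = Dv (vv n k) (fun q => 2 * ∑ i, (Dv (vv n i) L q)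
            * (Dv (vv n k) (Dv (vv n i) L) q)) p :=
      Dv_congr_on hQ hp (fun y hy => hDG' y hy (vv n k))
    have hdsum : DifferentiableAt ℝ
        (fun q => ∑ i, (Dv (vv n i) L q) * (Dv (vv n k) (Dv (vv n i) L) q)) p :=
      DifferentiableAt.fun_sum fun i _ => (da_Dv hL hQ hp).fun_mul (da_Dv (hPc i) hQ hp)
    rw [h1, Dv_const_mul 2 hdsum,
      Dv_sum (fun i => (da_Dv hL hQ hp).fun_mul (da_Dv (hPc i) hQ hp))]
    congr 1
    refine Finset.sum_congr rfl fun i _ => ?_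
    rw [Dv_mul (da_Dv hL hQ hp) (da_Dv (hPc i) hQ hp)]
    ring
  -- the Laplacian of W
  have hΔ : (∑ k, Dv (vv n k) (Dv (vv n k) (WW n L)) p)
      = (2 * T1 + 2 * T2) / φ ^ 2 + 8 * T3 / φ ^ 3 + 2 * g * T4 / φ ^ 3
        + 6 * g ^ 2 / φ ^ 4 := by
    have hper : ∀ k, Dv (vv n k) (Dv (vv n k) (WW n L)) p
        = (2 * ∑ i, ((Dv (vv n k) (Dv (vv n i) L) p) ^ 2
            + (Dv (vv n i) L p) * (Dv (vv n k) (Dv (vv n k) (Dv (vv n i) L)) p))) / φ ^ 2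
          + (4 * (Dv (vv n k) L p) * (2 * ∑ i, (Dv (vv n i) L p)
              * (Dv (vv n k) (Dv (vv n i) L) p))) / φ ^ 3
          + 2 * g * (Dv (vv n k) (Dv (vv n k) L) p) / φ ^ 3
          + 6 * g * (Dv (vv n k) L p) ^ 2 / φ ^ 4 := by
      intro k
      rw [hbody k, hDkk k, hDG' p hp (vv n k)]
    rw [Finset.sum_congr rfl (fun k _ => hper k)]
    rw [Finset.sum_add_distrib, Finset.sum_add_distrib, Finset.sum_add_distrib]
    have n1 : (∑ k, 2 * ∑ i, ((Dv (vv n k) (Dv (vv n i) L) p) ^ 2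
        + (Dv (vv n i) L p) * (Dv (vv n k) (Dv (vv n k) (Dv (vv n i) L)) p)))
        = 2 * T1 + 2 * T2 := by
      rw [hT1, hT2, Finset.mul_sum, Finset.mul_sum, ← Finset.sum_add_distrib]
      refine Finset.sum_congr rfl fun k _ => ?_
      rw [Finset.mul_sum, Finset.mul_sum, Finset.mul_sum, ← Finset.sum_add_distrib]
      exact Finset.sum_congr rfl fun i _ => by ring
    have n2 : (∑ k, 4 * (Dv (vv n k) L p) * (2 * ∑ i, (Dv (vv n i) L p)
        * (Dv (vv n k) (Dv (vv n i) L) p))) = 8 * T3 := by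
      rw [hT3, Finset.mul_sum]
      refine Finset.sum_congr rfl fun k _ => ?_
      rw [← Finset.mul_sum]
      ring
    have n3 : (∑ k, 2 * g * (Dv (vv n k) (Dv (vv n k) L) p)) = 2 * g * T4 := by
      rw [hT4]; exact (Finset.mul_sum _ _ _).symm
    have n4 : (∑ k, 6 * g * (Dv (vv n k) L p) ^ 2) = 6 * g ^ 2 := by
      calc ∑ k, 6 * g * (Dv (vv n k) L p) ^ 2
          = 6 * g * ∑ k, (Dv (vv n k) L p) ^ 2 := (Finset.mul_sum _ _ _).symm
        _ = 6 * g ^ 2 := by rw [← hg]; ring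
    rw [← Finset.sum_div, ← Finset.sum_div, ← Finset.sum_div, ← Finset.sum_div,
      n1, n2, n3, n4]
  -- mixed second derivatives, via the heat equation
  have hswap : ∀ i, Dv (tau n) (Dv (vv n i) L) p
      = (∑ k, Dv (vv n k) (Dv (vv n k) (Dv (vv n i) L)) p)
        + 2 * ∑ j, (Dv (vv n j) L p) * (Dv (vv n i) (Dv (vv n j) L) p) := by
    intro i
    have s1 : Dv (tau n) (Dv (vv n i) L) p = Dv (vv n i) (Dv (tau n) L) p :=
      Dv_comm hL hQ hp (tau n) (vv n i)
    have s2 : Dv (vv n i) (Dv (tau n) L) p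
        = Dv (vv n i) (fun q => (∑ k, Dv (vv n k) (Dv (vv n k) L) q) + GG n L q) p :=
      Dv_congr_on hQ hp hheatL
    have hdsum : DifferentiableAt ℝ (fun q => ∑ k, Dv (vv n k) (Dv (vv n k) L) q) p :=
      DifferentiableAt.fun_sum fun k _ => da_Dv (hPc k) hQ hp
    have s3 : Dv (vv n i) (fun q => (∑ k, Dv (vv n k) (Dv (vv n k) L) q) + GG n L q) p
        = (∑ k, Dv (vv n i) (Dv (vv n k) (Dv (vv n k) L)) p) + Dv (vv n i) (GG n L) p := by
      rw [Dv_add hdsum (hdG p hp), Dv_sum (fun k => da_Dv (hPc k) hQ hp)]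
    have s4 : ∀ k, Dv (vv n i) (Dv (vv n k) (Dv (vv n k) L)) p
        = Dv (vv n k) (Dv (vv n k) (Dv (vv n i) L)) p := by
      intro k
      have u1 : Dv (vv n i) (Dv (vv n k) (Dv (vv n k) L)) p
          = Dv (vv n k) (Dv (vv n i) (Dv (vv n k) L)) p :=
        Dv_comm (hPc k) hQ hp (vv n i) (vv n k)
      have u2 : Dv (vv n k) (Dv (vv n i) (Dv (vv n k) L)) p
          = Dv (vv n k) (Dv (vv n k) (Dv (vv n i) L)) p :=
        Dv_congr_on hQ hp (fun y hy => Dv_comm hL hQ hy (vv n i) (vv n k))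
      rw [u1, u2]
    rw [s1, s2, s3, Finset.sum_congr rfl (fun k _ => s4 k), hDG' p hp (vv n i)]
  -- time derivative of W
  have hτ : Dv (tau n) (WW n L) p
      = (2 * T2 + 4 * T3) / φ ^ 2 + 2 * (g * (T4 + g)) / φ ^ 3 := by
    have h1 := hDW p hp (tau n)
    have hTp : Dv (tau n) L p = T4 + g := by
      rw [hheatL p hp, hGp, hT4]
    have h2 : Dv (tau n) (GG n L) p
        = 2 * ∑ i, (Dv (vv n i) L p) * (Dv (tau n) (Dv (vv n i) L) p) :=
      hDG' p hp (tau n)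
    have h3 : (∑ i, (Dv (vv n i) L p) * (Dv (tau n) (Dv (vv n i) L) p))
        = T2 + 2 * T3 := by
      rw [Finset.sum_congr rfl (fun i _ => by rw [hswap i])]
      have h4 : ∀ i : Fin n, (Dv (vv n i) L p) *
          ((∑ k, Dv (vv n k) (Dv (vv n k) (Dv (vv n i) L)) p)
            + 2 * ∑ j, (Dv (vv n j) L p) * (Dv (vv n i) (Dv (vv n j) L) p))
          = (∑ k, (Dv (vv n i) L p) * (Dv (vv n k) (Dv (vv n k) (Dv (vv n i) L)) p))
            + 2 * ∑ j, (Dv (vv n i) L p) * ((Dv (vv n j) L p) * (Dv (vv n i) (Dv (vv n j) L) p)) := by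
        intro i
        rw [← Finset.mul_sum, ← Finset.mul_sum]
        ring
      rw [Finset.sum_congr rfl (fun i _ => h4 i), Finset.sum_add_distrib]
      congr 1
      · rw [hT2, Finset.sum_comm]
      · rw [hT3, Finset.mul_sum]
    rw [h1, hGp, ← hφ, h2, h3, hTp]
    field_simp
    ring
  -- the first-order sum on the right-hand side
  have hS : (∑ i, Dv (vv n i) L p * Dv (vv n i) (WW n L) p)
      = 2 * T3 / φ ^ 2 + 2 * (g * g) / φ ^ 3 := by
    have h1 : ∀ i : Fin n, Dv (vv n i) L p * Dv (vv n i) (WW n L) p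
        = (2 * ((Dv (vv n i) L p) * ∑ j, (Dv (vv n j) L p)
            * (Dv (vv n i) (Dv (vv n j) L) p))) / φ ^ 2
          + (2 * g * ((Dv (vv n i) L p) * (Dv (vv n i) L p))) / φ ^ 3 := by
      intro i
      rw [hDW p hp (vv n i), hGp, ← hφ, hDG' p hp (vv n i)]
      ring
    rw [Finset.sum_congr rfl (fun i _ => h1 i), Finset.sum_add_distrib,
      ← Finset.sum_div, ← Finset.sum_div]
    have num1 : (∑ i, 2 * ((Dv (vv n i) L p) * ∑ j, (Dv (vv n j) L p)
        * (Dv (vv n i) (Dv (vv n j) L) p))) = 2 * T3 := by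
      rw [hT3, Finset.mul_sum]
      refine Finset.sum_congr rfl fun k _ => ?_
      rw [← Finset.mul_sum]
    have num2 : (∑ i, 2 * g * ((Dv (vv n i) L p) * (Dv (vv n i) L p))) = 2 * (g * g) := by
      have e0 : (∑ i, (Dv (vv n i) L p) * (Dv (vv n i) L p)) = g := by
        rw [hg]; exact Finset.sum_congr rfl fun i _ => (pow_two _).symm
      calc ∑ i, 2 * g * ((Dv (vv n i) L p) * (Dv (vv n i) L p))
          = 2 * g * ∑ i, (Dv (vv n i) L p) * (Dv (vv n i) L p) :=
            (Finset.mul_sum _ _ _).symm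
        _ = 2 * (g * g) := by rw [e0]; ring
    rw [num1, num2]
  have hWp : WW n L p = g / φ ^ 2 := by
    have h0 : WW n L p = GG n L p / (1 - L p) ^ 2 := rfl
    rw [h0, hGp, ← hφ]
  have hLp : L p = 1 - φ := by rw [hφ]; ring
  -- the Cauchy–Schwarz inequality
  have hCS : T3 ^ 2 ≤ g ^ 2 * T1 := by
    have e3 : T3 = ∑ x : Fin n × Fin n,
        ((Dv (vv n x.1) L p) * (Dv (vv n x.2) L p)) * (Dv (vv n x.1) (Dv (vv n x.2) L) p) := by
      rw [hT3, Fintype.sum_prod_type]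
      exact Finset.sum_congr rfl fun k _ => Finset.sum_congr rfl fun i _ => by ring
    have e1 : T1 = ∑ x : Fin n × Fin n, (Dv (vv n x.1) (Dv (vv n x.2) L) p) ^ 2 := by
      rw [hT1, Fintype.sum_prod_type]
    have eg : g ^ 2 = ∑ x : Fin n × Fin n,
        ((Dv (vv n x.1) L p) * (Dv (vv n x.2) L p)) ^ 2 := by
      rw [hg, Fintype.sum_prod_type, pow_two, Finset.sum_mul_sum]
      exact Finset.sum_congr rfl fun k _ => Finset.sum_congr rfl fun i _ => by ring
    rw [e3, e1, eg]
    exact Finset.sum_mul_sq_le_sq_mul_sq Finset.univ _ _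
  have key : (0:ℝ) ≤ φ ^ 2 * T1 + 2 * φ * T3 + g ^ 2 := alg φ T1 g T3 hφ1 hT1nn hg0 hCS
  -- final assembly
  rw [hΔ, hτ, hS, hWp, hLp, ge_iff_le, ← sub_nonneg]
  have heq : ((2 * T1 + 2 * T2) / φ ^ 2 + 8 * T3 / φ ^ 3 + 2 * g * T4 / φ ^ 3
        + 6 * g ^ 2 / φ ^ 4 - ((2 * T2 + 4 * T3) / φ ^ 2 + 2 * (g * (T4 + g)) / φ ^ 3))
      - (2 * (1 - φ) / φ * (2 * T3 / φ ^ 2 + 2 * (g * g) / φ ^ 3)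
        + 2 * φ * (g / φ ^ 2) ^ 2)
      = 2 * (φ ^ 2 * T1 + 2 * φ * T3 + g ^ 2) / φ ^ 4 := by
    field_simp
    ring
  rw [heq]
  positivity

end Main


open RealInnerProductSpace in
/-- Inequality (2.9), flat case `k = 0`: the key pointwise inequality in the proof. -/
theorem key_differential_inequality (n : ℕ) (hn : 1 ≤ n)
    (Q : Set (EuclideanSpace ℝ (Fin n) × ℝ)) (hQ : IsOpen Q)
    (u : EuclideanSpace ℝ (Fin n) → ℝ → ℝ)
    (hsol : IsHeatSolutionOn u Q)
    (hpos : ∀ p ∈ Q, 0 < u p.1 p.2) (hle : ∀ p ∈ Q, u p.1 p.2 ≤ 1)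
    (f : EuclideanSpace ℝ (Fin n) → ℝ → ℝ)
    (hf : f = fun x t => Real.log (u x t))
    (w : EuclideanSpace ℝ (Fin n) → ℝ → ℝ)
    (hw : w = fun x t => ‖sgrad (fun y => f y t) x‖ ^ 2 / (1 - f x t) ^ 2) :
    ∀ p ∈ Q,
      slap (fun y => w y p.2) p.1 - deriv (fun s => w p.1 s) p.2 ≥
        (2 * f p.1 p.2 / (1 - f p.1 p.2)) *
          ⟪sgrad (fun y => f y p.2) p.1, sgrad (fun y => w y p.2) p.1⟫ +
        2 * (1 - f p.1 p.2) * (w p.1 p.2) ^ 2 := by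
  subst hw
  subst hf
  rintro ⟨x0, t0⟩ hp
  dsimp only
  set L : EuclideanSpace ℝ (Fin n) × ℝ → ℝ := fun q => Real.log (u q.1 q.2) with hLdef
  have hU : ContDiffOn ℝ (⊤ : ℕ∞) (fun q : EuclideanSpace ℝ (Fin n) × ℝ => u q.1 q.2) Q :=
    hsol.1
  have hLc : ContDiffOn ℝ (⊤ : ℕ∞) L Q := hU.log (fun q hq => (hpos q hq).ne')
  have hL0 : ∀ q ∈ Q, L q ≤ 0 := fun q hq => Real.log_nonpos (hpos q hq).le (hle q hq)
  have hUd : ∀ y ∈ Q, DifferentiableAt ℝ (fun q : EuclideanSpace ℝ (Fin n) × ℝ => u q.1 q.2) y :=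
    fun y hy => da_of_cd hU hQ hy
  have hUne : ∀ y ∈ Q, u y.1 y.2 ≠ 0 := fun y hy => (hpos y hy).ne'
  -- the heat equation, in joint-variable form
  have hheatU : ∀ q ∈ Q, Dv (tau n) (fun q : EuclideanSpace ℝ (Fin n) × ℝ => u q.1 q.2) q
      = ∑ i, Dv (vv n i) (Dv (vv n i)
          (fun q : EuclideanSpace ℝ (Fin n) × ℝ => u q.1 q.2)) q := by
    rintro ⟨x, t⟩ hq
    have h1 := hsol.2 (x, t) hq
    have h2 : deriv (fun s => u x s) t
        = Dv (tau n) (fun q : EuclideanSpace ℝ (Fin n) × ℝ => u q.1 q.2) (x, t) :=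
      deriv_slice_snd (fun q : EuclideanSpace ℝ (Fin n) × ℝ => u q.1 q.2) x t
        (hUd (x, t) hq)
    have h3 : slap (fun y => u y t) x
        = ∑ i, Dv (vv n i) (Dv (vv n i)
            (fun q : EuclideanSpace ℝ (Fin n) × ℝ => u q.1 q.2)) (x, t) :=
      slap_slice Q hQ _ hU hq
    exact (h2.symm.trans h1).trans h3
  -- the heat-type equation for L = log u
  have hlog : ∀ y ∈ Q, ∀ z, Dv z L y
      = Dv z (fun q : EuclideanSpace ℝ (Fin n) × ℝ => u q.1 q.2) y / u y.1 y.2 := by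
    intro y hy z
    exact Dv_log (hUd y hy) (hUne y hy)
  have hheatL : ∀ q ∈ Q, Dv (tau n) L q = (∑ i, Dv (vv n i) (PP n L i) q) + GG n L q := by
    intro q hq
    have hPiq : ∀ i : Fin n, Dv (vv n i) (PP n L i) q
        = (u q.1 q.2 * Dv (vv n i) (Dv (vv n i)
              (fun q : EuclideanSpace ℝ (Fin n) × ℝ => u q.1 q.2)) q
           - Dv (vv n i) (fun q : EuclideanSpace ℝ (Fin n) × ℝ => u q.1 q.2) q
             * Dv (vv n i) (fun q : EuclideanSpace ℝ (Fin n) × ℝ => u q.1 q.2) q)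
          / (u q.1 q.2) ^ 2 := by
      intro i
      have hcong : Dv (vv n i) (PP n L i) q
          = Dv (vv n i) (fun y => Dv (vv n i)
              (fun q : EuclideanSpace ℝ (Fin n) × ℝ => u q.1 q.2) y / u y.1 y.2) q :=
        Dv_congr_on hQ hq (fun y hy => hlog y hy (vv n i))
      rw [hcong, Dv_div (da_Dv hU hQ hq) (hUd q hq) (hUne q hq)]
    have hTq : Dv (tau n) L q
        = Dv (tau n) (fun q : EuclideanSpace ℝ (Fin n) × ℝ => u q.1 q.2) q / u q.1 q.2 :=
      hlog q hq _
    have hGq : GG n L q = ∑ i, (Dv (vv n i)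
        (fun q : EuclideanSpace ℝ (Fin n) × ℝ => u q.1 q.2) q / u q.1 q.2) ^ 2 := by
      have h0 : GG n L q = ∑ i, (Dv (vv n i) L q) ^ 2 := rfl
      rw [h0]
      exact Finset.sum_congr rfl fun i _ => by rw [hlog q hq (vv n i)]
    rw [hTq, hGq, Finset.sum_congr rfl (fun i _ => hPiq i), hheatU q hq,
      Finset.sum_div, ← Finset.sum_add_distrib]
    refine Finset.sum_congr rfl fun i _ => ?_
    have h0 := hUne q hq
    field_simp
    ring
  have key := main_aux Q hQ L hLc hL0 hheatL (x0, t0) hp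
  -- smoothness of W
  have hWWc : ContDiffOn ℝ (⊤ : ℕ∞) (WW n L) Q := by
    have hGc : ContDiffOn ℝ (⊤ : ℕ∞) (fun q => ∑ i, (Dv (vv n i) L q) ^ 2) Q :=
      ContDiffOn.sum fun i _ => (cd_Dv hLc hQ).pow 2
    have hne : ∀ q ∈ Q, ((1:ℝ) - L q) ^ 2 ≠ 0 := fun q hq =>
      pow_ne_zero 2 (by have := hL0 q hq; intro h; linarith)
    exact hGc.div (((contDiffOn_const (c := (1:ℝ))).sub hLc).pow 2) hne
  -- pointwise identification of w with WW
  have hwfun : ∀ y t, ((y, t) ∈ Q) →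
      ‖sgrad (fun y' => Real.log (u y' t)) y‖ ^ 2 / (1 - Real.log (u y t)) ^ 2
        = WW n L (y, t) := by
    intro y t hyt
    have h1 : ‖sgrad (fun y' => Real.log (u y' t)) y‖ ^ 2 = GG n L (y, t) := by
      rw [normsq_sgrad]
      have h2 : GG n L (y, t) = ∑ i, (Dv (vv n i) L (y, t)) ^ 2 := rfl
      rw [h2]
      refine Finset.sum_congr rfl fun i _ => ?_
      congr 1
      exact fderiv_slice_fst L y t (da_of_cd hLc hQ hyt) (EuclideanSpace.single i 1)
    have h4 : WW n L (y, t) = GG n L (y, t) / (1 - L (y, t)) ^ 2 := rfl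
    rw [h1, h4]
  -- neighbourhood identifications
  have hSopen : IsOpen {y : EuclideanSpace ℝ (Fin n) | (y, t0) ∈ Q} :=
    hQ.preimage (Continuous.prodMk continuous_id continuous_const)
  have hTopen : IsOpen {s : ℝ | ((x0, s) : EuclideanSpace ℝ (Fin n) × ℝ) ∈ Q} :=
    hQ.preimage (Continuous.prodMk continuous_const continuous_id)
  have hev : (fun y => ‖sgrad (fun y' => Real.log (u y' t0)) y‖ ^ 2
        / (1 - Real.log (u y t0)) ^ 2) =ᶠ[nhds x0] (fun y => WW n L (y, t0)) := by
    filter_upwards [hSopen.mem_nhds hp] with y hy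
    exact hwfun y t0 hy
  have hevt : (fun s => ‖sgrad (fun y' => Real.log (u y' s)) x0‖ ^ 2
        / (1 - Real.log (u x0 s)) ^ 2) =ᶠ[nhds t0] (fun s => WW n L (x0, s)) := by
    filter_upwards [hTopen.mem_nhds hp] with s hs
    exact hwfun x0 s hs
  -- convert the four pieces of the goal
  have hslap : slap (fun y => ‖sgrad (fun y' => Real.log (u y' t0)) y‖ ^ 2
      / (1 - Real.log (u y t0)) ^ 2) x0
      = ∑ k, Dv (vv n k) (Dv (vv n k) (WW n L)) (x0, t0) :=
    (slap_congr hev).trans (slap_slice Q hQ (WW n L) hWWc hp)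
  have hderiv : deriv (fun s => ‖sgrad (fun y' => Real.log (u y' s)) x0‖ ^ 2
      / (1 - Real.log (u x0 s)) ^ 2) t0 = Dv (tau n) (WW n L) (x0, t0) := by
    rw [hevt.deriv_eq]
    exact deriv_slice_snd (WW n L) x0 t0 (da_of_cd hWWc hQ hp)
  have hinner : (inner ℝ (sgrad (fun y => Real.log (u y t0)) x0)
        (sgrad (fun y => ‖sgrad (fun y' => Real.log (u y' t0)) y‖ ^ 2
          / (1 - Real.log (u y t0)) ^ 2) x0) : ℝ)
      = ∑ i, PP n L i (x0, t0) * Dv (vv n i) (WW n L) (x0, t0) := by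
    rw [inner_sgrad]
    refine Finset.sum_congr rfl fun i _ => ?_
    congr 1
    · exact fderiv_slice_fst L x0 t0 (da_of_cd hLc hQ hp) (EuclideanSpace.single i 1)
    · rw [show fderiv ℝ (fun y => ‖sgrad (fun y' => Real.log (u y' t0)) y‖ ^ 2
          / (1 - Real.log (u y t0)) ^ 2) x0
          = fderiv ℝ (fun y => WW n L (y, t0)) x0 from hev.fderiv_eq]
      exact fderiv_slice_fst (WW n L) x0 t0 (da_of_cd hWWc hQ hp) (EuclideanSpace.single i 1)
  have hLpt : Real.log (u x0 t0) = L (x0, t0) := rfl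
  rw [hslap, hderiv, hinner, hwfun x0 t0 hp, hLpt]
  exact key
end

section
/- For every constant c > 0 and every exponent α ∈ [0, 1), there exists a smooth positive solution u of the heat equation on Q := [1,3] × [1,2] ⊂ ℝ × ℝ such that, with M := sup_Q u, one has |∂_x u(2,2)|/u(2,2) > c (1 + ln(M/u(2,2)))^α. Indeed, for a > 0 the function u(x,t) = e^{a x + a² t} solves the heat equation, satisfies M = e^{3a + 2a²}, |∂_x u(2,2)|/u(2,2) = a and ln(M/u(2,2)) = a. (Remark 1.1: the logarithmic correction in Theorem 1.1 is sharp, and Hamilton's estimate (1.3) with the square root of the log fails on noncompact spaces.) -/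
open Set

/-- `u(x,t)` is a (smooth) solution of the one-dimensional heat equation
`∂_t u = ∂_x² u` on `Q ⊂ ℝ × ℝ`. -/
def IsHeatSolutionOn1D (u : ℝ → ℝ → ℝ) (Q : Set (ℝ × ℝ)) : Prop :=
  ContDiffOn ℝ (⊤ : ℕ∞) (fun p : ℝ × ℝ => u p.1 p.2) Q ∧
  ∀ p ∈ Q, deriv (fun s => u p.1 s) p.2 = deriv (deriv (fun y => u y p.2)) p.1

/-- Remark 1.1: the logarithmic correction in Theorem 1.1 is sharp; any power
`α < 1` of the log term fails. -/
theorem log_correction_sharp (c α : ℝ) (hc : 0 < c) (hα : α ∈ Ico (0:ℝ) 1) :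
    ∃ u : ℝ → ℝ → ℝ,
      IsHeatSolutionOn1D u (Icc 1 3 ×ˢ Icc 1 2) ∧
      (∀ p ∈ Icc (1:ℝ) 3 ×ˢ Icc (1:ℝ) 2, 0 < u p.1 p.2) ∧
      ∀ M : ℝ, M = sSup ((fun p : ℝ × ℝ => u p.1 p.2) '' (Icc 1 3 ×ˢ Icc 1 2)) →
        c * (1 + Real.log (M / u 2 2)) ^ α < |deriv (fun y => u y 2) 2| / u 2 2 := by
  obtain ⟨hα0, hα1⟩ := hα
  set a : ℝ := max 1 ((c * 2 ^ α) ^ (1/(1-α)) + 1) with ha_def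
  have ha1 : (1:ℝ) ≤ a := le_max_left _ _
  have ha : (0:ℝ) < a := lt_of_lt_of_le one_pos ha1
  -- key inequality
  have hb : (0:ℝ) < c * 2 ^ α := mul_pos hc (Real.rpow_pos_of_pos two_pos α)
  have h1α : (0:ℝ) < 1 - α := by linarith
  have key : c * (1 + a) ^ α < a := by
    have h2a : (1 + a) ^ α ≤ (2 * a) ^ α := by
      apply Real.rpow_le_rpow (by linarith) (by linarith) hα0
    have h2a' : (2 * a) ^ α = 2 ^ α * a ^ α :=
      Real.mul_rpow (by norm_num) ha.le
    have hstep : c * 2 ^ α < a ^ (1 - α) := by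
      have hlt : (c * 2 ^ α) ^ (1/(1-α)) < a := by
        calc (c * 2 ^ α) ^ (1/(1-α)) < (c * 2 ^ α) ^ (1/(1-α)) + 1 := by linarith
          _ ≤ a := le_max_right _ _
      have := Real.rpow_lt_rpow (Real.rpow_nonneg hb.le _) hlt h1α
      rwa [← Real.rpow_mul hb.le, one_div, inv_mul_cancel₀ h1α.ne',
        Real.rpow_one] at this
      
    calc c * (1 + a) ^ α ≤ c * (2 ^ α * a ^ α) := by
          rw [← h2a']; exact mul_le_mul_of_nonneg_left h2a hc.le
      _ = (c * 2 ^ α) * a ^ α := by ring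
      _ < a ^ (1 - α) * a ^ α := by
          exact mul_lt_mul_of_pos_right hstep (Real.rpow_pos_of_pos ha α)
      _ = a := by
          rw [← Real.rpow_add ha]; norm_num
  refine ⟨fun x t => Real.exp (a * x + a ^ 2 * t), ⟨?_, ?_⟩, ?_, ?_⟩
  · exact (Real.contDiff_exp.comp
      ((contDiff_fst.const_smul a).add (contDiff_snd.const_smul (a^2)))).contDiffOn
  · rintro ⟨x, t⟩ -
    have hdx : ∀ y s : ℝ, HasDerivAt (fun y => Real.exp (a * y + a ^ 2 * s))
        (a * Real.exp (a * y + a ^ 2 * s)) y := by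
      intro y s
      have : HasDerivAt (fun y : ℝ => a * y + a ^ 2 * s) a y := by
        simpa using ((hasDerivAt_id y).const_mul a).add_const (a ^ 2 * s)
      simpa [mul_comm] using this.exp
    have hdx' : (deriv (fun y => Real.exp (a * y + a ^ 2 * t)))
        = fun y => a * Real.exp (a * y + a ^ 2 * t) := by
      funext y; exact (hdx y t).deriv
    have hdt : HasDerivAt (fun s => Real.exp (a * x + a ^ 2 * s))
        (a ^ 2 * Real.exp (a * x + a ^ 2 * t)) t := by
      have : HasDerivAt (fun s : ℝ => a * x + a ^ 2 * s) (a ^ 2) t := by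
        simpa using ((hasDerivAt_id t).const_mul (a ^ 2)).const_add (a * x)
      simpa [mul_comm] using this.exp
    have hdxx : HasDerivAt (fun y => a * Real.exp (a * y + a ^ 2 * t))
        (a ^ 2 * Real.exp (a * x + a ^ 2 * t)) x := by
      have := (hdx x t).const_mul a
      rw [show a ^ 2 * Real.exp (a * x + a ^ 2 * t) = a * (a * Real.exp (a * x + a ^ 2 * t)) by ring]; exact this
    simp only [hdt.deriv, hdx', hdxx.deriv]
  · rintro ⟨x, t⟩ -; exact Real.exp_pos _
  · intro M hM
    have hsup : sSup ((fun p : ℝ × ℝ => Real.exp (a * p.1 + a ^ 2 * p.2)) ''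
        (Icc 1 3 ×ˢ Icc 1 2)) = Real.exp (a * 3 + a ^ 2 * 2) := by
      apply IsGreatest.csSup_eq
      constructor
      · exact ⟨(3, 2), ⟨⟨by norm_num, le_refl _⟩, ⟨by norm_num, le_refl _⟩⟩, rfl⟩
      · rintro y ⟨⟨x, t⟩, ⟨⟨_, hx3⟩, ⟨_, ht2⟩⟩, rfl⟩
        apply Real.exp_le_exp.mpr
        have := sq_nonneg a
        nlinarith
    have hM' : M = Real.exp (a * 3 + a ^ 2 * 2) := hM.trans hsup
    have hlog : Real.log (M / Real.exp (a * 2 + a ^ 2 * 2)) = a := by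
      rw [hM', ← Real.exp_sub, Real.log_exp]; ring
    have hdx : HasDerivAt (fun y => Real.exp (a * y + a ^ 2 * 2))
        (a * Real.exp (a * 2 + a ^ 2 * 2)) 2 := by
      have : HasDerivAt (fun y : ℝ => a * y + a ^ 2 * 2) a 2 := by
        simpa using ((hasDerivAt_id 2).const_mul a).add_const (a ^ 2 * 2)
      simpa [mul_comm] using this.exp
    rw [hdx.deriv, hlog, abs_of_pos (mul_pos ha (Real.exp_pos _)),
      mul_div_assoc, div_self (Real.exp_ne_zero _), mul_one]
    exact key
end
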